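/- arXiv:1408.3294 — 7 statements merged into one kernel-verified Lean document; each statement's English description precedes it below -/
import Mathlib

section
/- Let p be a positive integer, q ∈ (0,1), t > 0 and 0 < s ≤ 1. Then ψ_{p,q}(s+t) ≥ ψ_{p,q}(s) + ψ_{p,q}(t). -/
open Finset

/-- The (p,q)-analogue of the digamma function,
`ψ_{p,q}(t) = ln [p]_q + (ln q) ∑_{n=1}^p q^{n t}/(1 - q^n)` with `[p]_q = (1-q^p)/(1-q)`. -/
noncomputable def psiPQ (p : ℕ) (q : ℝ) (t : ℝ) : ℝ :=
  Real.log ((1 - q ^ p) / (1 - q)) +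
    Real.log q * ∑ n ∈ Finset.Icc 1 p, q ^ ((n : ℝ) * t) / (1 - q ^ n)

lemma aux_pow_lt_one {q : ℝ} (hq0 : 0 < q) (hq1 : q < 1) {n : ℕ} (hn : 1 ≤ n) :
    q ^ n < 1 :=
  pow_lt_one₀ hq0.le hq1 (by omega)

lemma aux_log_le_strong (q : ℝ) (hq0 : 0 < q) (hq1 : q < 1) (p : ℕ) :
    Real.log ((1 - q ^ (p + 1)) / (1 - q)) ≤
      -Real.log q * ∑ n ∈ Finset.Icc 1 p, q ^ n / (1 - q ^ n) := by
  have hq : 0 < 1 - q := by linarith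
  induction p with
  | zero =>
    simp only [zero_add, pow_one]
    rw [div_self (by linarith : (1 : ℝ) - q ≠ 0)]
    simp
  | succ p ih =>
    have hd1 : 0 < 1 - q ^ (p + 1) := by
      have := aux_pow_lt_one hq0 hq1 (n := p + 1) (by omega); linarith
    have hd2 : 0 < 1 - q ^ (p + 2) := by
      have := aux_pow_lt_one hq0 hq1 (n := p + 2) (by omega); linarith
    rw [Finset.sum_Icc_succ_top (by omega : 1 ≤ p + 1)]
    have hsplit : Real.log ((1 - q ^ (p + 2)) / (1 - q)) =
        Real.log ((1 - q ^ (p + 1)) / (1 - q)) +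
          Real.log ((1 - q ^ (p + 2)) / (1 - q ^ (p + 1))) := by
      rw [← Real.log_mul (by positivity) (by positivity)]
      congr 1
      field_simp
    have hlog2 : Real.log ((1 - q ^ (p + 2)) / (1 - q ^ (p + 1))) ≤
        -Real.log q * (q ^ (p + 1) / (1 - q ^ (p + 1))) := by
      have h1 : Real.log ((1 - q ^ (p + 2)) / (1 - q ^ (p + 1))) ≤
          (1 - q ^ (p + 2)) / (1 - q ^ (p + 1)) - 1 :=
        Real.log_le_sub_one_of_pos (by positivity)
      have h2 : (1 - q ^ (p + 2)) / (1 - q ^ (p + 1)) - 1 =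
          (1 - q) * (q ^ (p + 1) / (1 - q ^ (p + 1))) := by
        field_simp
        ring
      have h3 : 1 - q ≤ -Real.log q := by
        have := Real.log_le_sub_one_of_pos hq0
        linarith
      have h4 : 0 ≤ q ^ (p + 1) / (1 - q ^ (p + 1)) := by positivity
      calc Real.log ((1 - q ^ (p + 2)) / (1 - q ^ (p + 1)))
          ≤ (1 - q) * (q ^ (p + 1) / (1 - q ^ (p + 1))) := by rw [← h2]; exact h1
        _ ≤ -Real.log q * (q ^ (p + 1) / (1 - q ^ (p + 1))) :=
            mul_le_mul_of_nonneg_right h3 h4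
    rw [hsplit, mul_add]
    exact add_le_add ih hlog2

lemma aux_log_le (q : ℝ) (hq0 : 0 < q) (hq1 : q < 1) (p : ℕ) (hp : 0 < p) :
    Real.log ((1 - q ^ p) / (1 - q)) ≤
      -Real.log q * ∑ n ∈ Finset.Icc 1 p, q ^ n / (1 - q ^ n) := by
  have hq : 0 < 1 - q := by linarith
  have hp1 : q ^ p < 1 := aux_pow_lt_one hq0 hq1 hp
  have hp2 : q ^ (p + 1) < 1 := aux_pow_lt_one hq0 hq1 (by omega)
  have hple : q ^ (p + 1) ≤ q ^ p :=
    pow_le_pow_of_le_one hq0.le hq1.le (Nat.le_succ p)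
  have hle : Real.log ((1 - q ^ p) / (1 - q)) ≤
      Real.log ((1 - q ^ (p + 1)) / (1 - q)) := by
    have h1 : 0 < 1 - q ^ p := by linarith
    have h2 : 0 < 1 - q ^ (p + 1) := by linarith
    apply Real.log_le_log (by positivity)
    gcongr
  exact hle.trans (aux_log_le_strong q hq0 hq1 p)

theorem psiPQ_add_ge (p : ℕ) (hp : 0 < p) (q : ℝ) (hq : q ∈ Set.Ioo (0 : ℝ) 1)
    (s t : ℝ) (ht : 0 < t) (hs0 : 0 < s) (hs1 : s ≤ 1) :
    psiPQ p q (s + t) ≥ psiPQ p q s + psiPQ p q t := by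
  obtain ⟨hq0, hq1⟩ := hq
  have hL : Real.log q < 0 := Real.log_neg hq0 hq1
  set L := Real.log q with hLdef
  -- pointwise bound
  have key : ∀ n ∈ Finset.Icc 1 p,
      q ^ ((n : ℝ) * (s + t)) / (1 - q ^ n) - q ^ ((n : ℝ) * s) / (1 - q ^ n)
          - q ^ ((n : ℝ) * t) / (1 - q ^ n)
        ≤ (1 - q ^ ((n : ℝ) * t)) - 1 / (1 - q ^ n) := by
    intro n hn
    have hn1 : 1 ≤ n := (Finset.mem_Icc.mp hn).1
    have hqn : q ^ n < 1 := aux_pow_lt_one hq0 hq1 hn1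
    have hd : 0 < 1 - q ^ n := by linarith
    set a := q ^ ((n : ℝ) * s) with hadef
    set b := q ^ ((n : ℝ) * t) with hbdef
    have hb0 : 0 < b := Real.rpow_pos_of_pos hq0 _
    have hb1 : b ≤ 1 := Real.rpow_le_one hq0.le hq1.le (by positivity)
    have ha1 : a ≤ 1 := Real.rpow_le_one hq0.le hq1.le (by positivity)
    have ha_ge : q ^ n ≤ a := by
      have hns : (n : ℝ) * s ≤ (n : ℝ) := by
        nlinarith [(Nat.cast_nonneg n : (0 : ℝ) ≤ n)]
      have h := Real.rpow_le_rpow_of_exponent_ge hq0 hq1.le hns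
      rwa [Real.rpow_natCast] at h
    have hab : q ^ ((n : ℝ) * (s + t)) = a * b := by
      rw [hadef, hbdef, ← Real.rpow_add hq0]
      ring_nf
    rw [hab, div_sub_div_same, div_sub_div_same]
    have hnum : a * b - a - b ≤ (1 - b) * (1 - q ^ n) - 1 := by
      nlinarith [mul_nonneg (by linarith : (0 : ℝ) ≤ a - q ^ n) (by linarith : (0 : ℝ) ≤ 1 - b)]
    calc (a * b - a - b) / (1 - q ^ n)
        ≤ ((1 - b) * (1 - q ^ n) - 1) / (1 - q ^ n) := by gcongr
      _ = (1 - b) - 1 / (1 - q ^ n) := by field_simp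
  have hdall : ∀ n ∈ Finset.Icc 1 p, (0 : ℝ) < 1 - q ^ n := by
    intro n hn
    have := aux_pow_lt_one hq0 hq1 (Finset.mem_Icc.mp hn).1
    linarith
  -- sum bound
  have hsum : ∑ n ∈ Finset.Icc 1 p,
      (q ^ ((n : ℝ) * (s + t)) / (1 - q ^ n) - q ^ ((n : ℝ) * s) / (1 - q ^ n)
        - q ^ ((n : ℝ) * t) / (1 - q ^ n))
      ≤ ∑ n ∈ Finset.Icc 1 p, ((1 - q ^ ((n : ℝ) * t)) - 1 / (1 - q ^ n)) :=
    Finset.sum_le_sum key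
  have hmul : L * ∑ n ∈ Finset.Icc 1 p, ((1 - q ^ ((n : ℝ) * t)) - 1 / (1 - q ^ n))
      ≤ L * ∑ n ∈ Finset.Icc 1 p,
        (q ^ ((n : ℝ) * (s + t)) / (1 - q ^ n) - q ^ ((n : ℝ) * s) / (1 - q ^ n)
          - q ^ ((n : ℝ) * t) / (1 - q ^ n)) :=
    mul_le_mul_of_nonpos_left hsum hL.le
  have hrhs : L * ∑ n ∈ Finset.Icc 1 p, ((1 - q ^ ((n : ℝ) * t)) - 1 / (1 - q ^ n))
      = ∑ n ∈ Finset.Icc 1 p, (-L * q ^ ((n : ℝ) * t) + -L * (q ^ n / (1 - q ^ n))) := by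
    rw [Finset.mul_sum]
    refine Finset.sum_congr rfl fun n hn => ?_
    have hd := hdall n hn
    have hd' : (1 : ℝ) - q ^ n ≠ 0 := ne_of_gt hd
    field_simp
    ring
  have hmid : -L * ∑ n ∈ Finset.Icc 1 p, q ^ n / (1 - q ^ n)
      ≤ ∑ n ∈ Finset.Icc 1 p, (-L * q ^ ((n : ℝ) * t) + -L * (q ^ n / (1 - q ^ n))) := by
    rw [Finset.mul_sum]
    refine Finset.sum_le_sum fun n hn => ?_
    have hb0 : 0 < q ^ ((n : ℝ) * t) := Real.rpow_pos_of_pos hq0 _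
    nlinarith
  have hfinal : Real.log ((1 - q ^ p) / (1 - q))
      ≤ L * ∑ n ∈ Finset.Icc 1 p,
        (q ^ ((n : ℝ) * (s + t)) / (1 - q ^ n) - q ^ ((n : ℝ) * s) / (1 - q ^ n)
          - q ^ ((n : ℝ) * t) / (1 - q ^ n)) := by
    calc Real.log ((1 - q ^ p) / (1 - q))
        ≤ -L * ∑ n ∈ Finset.Icc 1 p, q ^ n / (1 - q ^ n) := aux_log_le q hq0 hq1 p hp
      _ ≤ ∑ n ∈ Finset.Icc 1 p, (-L * q ^ ((n : ℝ) * t) + -L * (q ^ n / (1 - q ^ n))) := hmid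
      _ = L * ∑ n ∈ Finset.Icc 1 p, ((1 - q ^ ((n : ℝ) * t)) - 1 / (1 - q ^ n)) := hrhs.symm
      _ ≤ _ := hmul
  have hsplit : ∑ n ∈ Finset.Icc 1 p,
      (q ^ ((n : ℝ) * (s + t)) / (1 - q ^ n) - q ^ ((n : ℝ) * s) / (1 - q ^ n)
        - q ^ ((n : ℝ) * t) / (1 - q ^ n))
      = (∑ n ∈ Finset.Icc 1 p, q ^ ((n : ℝ) * (s + t)) / (1 - q ^ n))
        - (∑ n ∈ Finset.Icc 1 p, q ^ ((n : ℝ) * s) / (1 - q ^ n))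
        - (∑ n ∈ Finset.Icc 1 p, q ^ ((n : ℝ) * t) / (1 - q ^ n)) := by
    rw [← Finset.sum_sub_distrib, ← Finset.sum_sub_distrib]
  rw [hsplit] at hfinal
  unfold psiPQ
  rw [ge_iff_le]
  have := hfinal
  nlinarith [hfinal]
end

section
/- Let p be a positive integer, q ∈ (0,1), s, t > 0, and let m be a positive odd integer. Then ψ_{p,q}^{(m)}(s+t) ≤ ψ_{p,q}^{(m)}(s) + ψ_{p,q}^{(m)}(t). -/
open Finset

/-- The m-th derivative of the (p,q)-digamma function,
`ψ_{p,q}^{(m)}(t) = (ln q)^{m+1} ∑_{n=1}^p n^m q^{n t}/(1 - q^n)`. -/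
noncomputable def psiPQDeriv (p : ℕ) (q : ℝ) (m : ℕ) (t : ℝ) : ℝ :=
  (Real.log q) ^ (m + 1) *
    ∑ n ∈ Finset.Icc 1 p, (n : ℝ) ^ m * q ^ ((n : ℝ) * t) / (1 - q ^ n)

theorem psiPQDeriv_odd_add_le (p : ℕ) (hp : 0 < p) (q : ℝ) (hq : q ∈ Set.Ioo (0 : ℝ) 1)
    (s t : ℝ) (hs : 0 < s) (ht : 0 < t) (m : ℕ) (hm : 0 < m) (hodd : Odd m) :
    psiPQDeriv p q m (s + t) ≤ psiPQDeriv p q m s + psiPQDeriv p q m t := by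
  obtain ⟨hq0, hq1⟩ := hq
  have hC : 0 ≤ (Real.log q) ^ (m + 1) := Even.pow_nonneg (by
    obtain ⟨k, hk⟩ := hodd; exact ⟨k + 1, by omega⟩) _
  have hterm : ∀ (u : ℝ) (n : ℕ), n ∈ Finset.Icc 1 p →
      0 ≤ (n : ℝ) ^ m * q ^ ((n : ℝ) * u) / (1 - q ^ n) := by
    intro u n hn
    have hn1 : 1 ≤ n := (Finset.mem_Icc.mp hn).1
    have h1 : 0 < 1 - q ^ n := by
      have := pow_lt_one₀ hq0.le hq1 (by omega : n ≠ 0)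
      linarith
    positivity
  have hnonneg : ∀ u : ℝ, 0 ≤ psiPQDeriv p q m u := by
    intro u
    exact mul_nonneg hC (Finset.sum_nonneg (hterm u))
  have hmono : psiPQDeriv p q m (s + t) ≤ psiPQDeriv p q m s := by
    unfold psiPQDeriv
    apply mul_le_mul_of_nonneg_left _ hC
    apply Finset.sum_le_sum
    intro n hn
    have hn1 : 1 ≤ n := (Finset.mem_Icc.mp hn).1
    have h1 : 0 < 1 - q ^ n := by
      have := pow_lt_one₀ hq0.le hq1 (by omega : n ≠ 0)
      linarith
    have hrpow : q ^ ((n : ℝ) * (s + t)) ≤ q ^ ((n : ℝ) * s) := by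
      apply Real.rpow_le_rpow_of_exponent_ge hq0 hq1.le
      have : (0:ℝ) < (n:ℝ) := by exact_mod_cast hn1
      nlinarith
    gcongr
  linarith [hnonneg t]
end

section
/- Let p be a positive integer, q ∈ (0,1), s, t > 0, and let m be a positive even integer. Then ψ_{p,q}^{(m)}(s+t) ≥ ψ_{p,q}^{(m)}(s) + ψ_{p,q}^{(m)}(t). -/
open Finset

theorem psiPQDeriv_even_add_ge (p : ℕ) (hp : 0 < p) (q : ℝ) (hq : q ∈ Set.Ioo (0 : ℝ) 1)
    (s t : ℝ) (hs : 0 < s) (ht : 0 < t) (m : ℕ) (hm : 0 < m) (heven : Even m) :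
    psiPQDeriv p q m (s + t) ≥ psiPQDeriv p q m s + psiPQDeriv p q m t := by
  obtain ⟨hq0, hq1⟩ := hq
  have hL : (Real.log q) ^ (m + 1) ≤ 0 := by
    have hlog : Real.log q < 0 := Real.log_neg hq0 hq1
    exact Odd.pow_nonpos (heven.add_one) hlog.le
  unfold psiPQDeriv
  rw [ge_iff_le, ← mul_add, ← Finset.sum_add_distrib]
  apply mul_le_mul_of_nonpos_left _ hL
  apply Finset.sum_le_sum
  intro n hn
  have hn1 : 1 ≤ n := (Finset.mem_Icc.mp hn).1
  have hqn : (0:ℝ) < 1 - q ^ n := by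
    have : q ^ n < 1 := pow_lt_one₀ hq0.le hq1 (by omega)
    linarith
  have hcoef : (0:ℝ) ≤ (n : ℝ) ^ m / (1 - q ^ n) := by positivity
  have hmain : q ^ ((n : ℝ) * (s + t)) ≤ q ^ ((n : ℝ) * s) + q ^ ((n : ℝ) * t) := by
    have h1 : q ^ ((n : ℝ) * (s + t)) = q ^ ((n : ℝ) * s) * q ^ ((n : ℝ) * t) := by
      rw [mul_add, Real.rpow_add hq0]
    have h2 : q ^ ((n : ℝ) * t) ≤ 1 :=
      Real.rpow_le_one hq0.le hq1.le (by positivity)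
    have h3 : (0:ℝ) < q ^ ((n : ℝ) * s) := Real.rpow_pos_of_pos hq0 _
    have h4 : (0:ℝ) < q ^ ((n : ℝ) * t) := Real.rpow_pos_of_pos hq0 _
    nlinarith
  calc (n : ℝ) ^ m * q ^ ((n : ℝ) * (s + t)) / (1 - q ^ n)
      ≤ (n : ℝ) ^ m * (q ^ ((n : ℝ) * s) + q ^ ((n : ℝ) * t)) / (1 - q ^ n) := by
        gcongr
    _ = (n : ℝ) ^ m * q ^ ((n : ℝ) * s) / (1 - q ^ n)
        + (n : ℝ) ^ m * q ^ ((n : ℝ) * t) / (1 - q ^ n) := by ring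
end

section
/- Let p be a positive integer, q ∈ (0,1), s, t > 0, and let m be a positive odd integer. Then ψ_{p,q}^{(m)}(s) · ψ_{p,q}^{(m)}(t) ≥ (ψ_{p,q}^{(m)}(s+t))^2. -/
open Finset

theorem psiPQDeriv_mul_ge_sq (p : ℕ) (hp : 0 < p) (q : ℝ) (hq : q ∈ Set.Ioo (0 : ℝ) 1)
    (s t : ℝ) (hs : 0 < s) (ht : 0 < t) (m : ℕ) (hm : 0 < m) (hodd : Odd m) :
    psiPQDeriv p q m s * psiPQDeriv p q m t ≥ (psiPQDeriv p q m (s + t)) ^ 2 := by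
  obtain ⟨hq0, hq1⟩ := hq
  set a : ℕ → ℝ := fun n => (n : ℝ) ^ m / (1 - q ^ n) with ha_def
  have ha : ∀ n ∈ Finset.Icc 1 p, 0 ≤ a n := by
    intro n hn
    simp only [Finset.mem_Icc] at hn
    have h1 : q ^ n < 1 := pow_lt_one₀ hq0.le hq1 (by omega)
    exact div_nonneg (by positivity) (by linarith)
  set S : ℝ → ℝ := fun u => ∑ n ∈ Finset.Icc 1 p, a n * q ^ ((n : ℝ) * u) with hS_def
  have hSeq : ∀ u, psiPQDeriv p q m u = (Real.log q) ^ (m + 1) * S u := by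
    intro u
    unfold psiPQDeriv
    congr 1
    refine Finset.sum_congr rfl fun n hn => ?_
    simp only [ha_def]
    ring
  have hSnonneg : ∀ u, 0 ≤ S u := fun u =>
    Finset.sum_nonneg fun n hn => mul_nonneg (ha n hn) (Real.rpow_nonneg hq0.le _)
  -- S (s+t) ≤ S ((s+t)/2)
  have hmono : S (s + t) ≤ S ((s + t) / 2) := by
    refine Finset.sum_le_sum fun n hn => ?_
    refine mul_le_mul_of_nonneg_left ?_ (ha n hn)
    apply Real.rpow_le_rpow_of_exponent_ge hq0 hq1.le
    simp only [Finset.mem_Icc] at hn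
    have hn1 : (1 : ℝ) ≤ (n : ℝ) := by exact_mod_cast hn.1
    nlinarith
  -- Cauchy-Schwarz: S ((s+t)/2)^2 ≤ S s * S t
  have hCS : S ((s + t) / 2) ^ 2 ≤ S s * S t := by
    have key := Finset.sum_mul_sq_le_sq_mul_sq (Finset.Icc 1 p)
      (fun n => Real.sqrt (a n) * q ^ ((n : ℝ) * s / 2))
      (fun n => Real.sqrt (a n) * q ^ ((n : ℝ) * t / 2))
    have h1 : ∀ n ∈ Finset.Icc 1 p,
        (Real.sqrt (a n) * q ^ ((n : ℝ) * s / 2)) *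
          (Real.sqrt (a n) * q ^ ((n : ℝ) * t / 2)) = a n * q ^ ((n : ℝ) * ((s + t) / 2)) := by
      intro n hn
      rw [show (Real.sqrt (a n) * q ^ ((n : ℝ) * s / 2)) *
          (Real.sqrt (a n) * q ^ ((n : ℝ) * t / 2))
          = (Real.sqrt (a n) * Real.sqrt (a n)) *
            (q ^ ((n : ℝ) * s / 2) * q ^ ((n : ℝ) * t / 2)) by ring,
        Real.mul_self_sqrt (ha n hn), ← Real.rpow_add hq0]
      ring_nf
    have h2 : ∀ u : ℝ, ∀ n ∈ Finset.Icc 1 p,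
        (Real.sqrt (a n) * q ^ ((n : ℝ) * u / 2)) ^ 2 = a n * q ^ ((n : ℝ) * u) := by
      intro u n hn
      rw [mul_pow, Real.sq_sqrt (ha n hn), sq, ← Real.rpow_add hq0]
      ring_nf
    calc S ((s + t) / 2) ^ 2
        = (∑ n ∈ Finset.Icc 1 p, (Real.sqrt (a n) * q ^ ((n : ℝ) * s / 2)) *
            (Real.sqrt (a n) * q ^ ((n : ℝ) * t / 2))) ^ 2 := by
          rw [Finset.sum_congr rfl h1]
      _ ≤ (∑ n ∈ Finset.Icc 1 p, (Real.sqrt (a n) * q ^ ((n : ℝ) * s / 2)) ^ 2) *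
            (∑ n ∈ Finset.Icc 1 p, (Real.sqrt (a n) * q ^ ((n : ℝ) * t / 2)) ^ 2) := key
      _ = S s * S t := by
          rw [Finset.sum_congr rfl (h2 s), Finset.sum_congr rfl (h2 t)]
  have hmain : S (s + t) ^ 2 ≤ S s * S t :=
    le_trans (pow_le_pow_left₀ (hSnonneg _) hmono 2) hCS
  have hC : 0 ≤ (Real.log q) ^ (m + 1) := by
    have : Even (m + 1) := by
      obtain ⟨k, hk⟩ := hodd; exact ⟨k + 1, by omega⟩
    exact this.pow_nonneg _
  rw [ge_iff_le, hSeq, hSeq, hSeq, mul_pow]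
  calc ((Real.log q) ^ (m + 1)) ^ 2 * S (s + t) ^ 2
      ≤ ((Real.log q) ^ (m + 1)) ^ 2 * (S s * S t) :=
        mul_le_mul_of_nonneg_left hmain (sq_nonneg _)
    _ = ((Real.log q) ^ (m + 1) * S s) * ((Real.log q) ^ (m + 1) * S t) := by ring
end

section
/- Let p be a positive integer, q ∈ (0,1), s, t > 0, and let m be a positive odd integer. Then ψ_{p,q}^{(m)}(s) ≥ ψ_{p,q}^{(m)}(s+t) ≥ 0; that is, ψ_{p,q}^{(m)} is nonnegative on (0,∞) and nonincreasing in the sense that increasing the argument by t > 0 does not increase its value. -/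
open Finset

theorem psiPQDeriv_odd_antitone_nonneg (p : ℕ) (hp : 0 < p) (q : ℝ)
    (hq : q ∈ Set.Ioo (0 : ℝ) 1) (s t : ℝ) (hs : 0 < s) (ht : 0 < t)
    (m : ℕ) (hm : 0 < m) (hodd : Odd m) :
    psiPQDeriv p q m s ≥ psiPQDeriv p q m (s + t) ∧ psiPQDeriv p q m (s + t) ≥ 0 := by
  obtain ⟨hq0, hq1⟩ := hq
  have hL : 0 ≤ (Real.log q) ^ (m + 1) := by
    have : Even (m + 1) := hodd.add_one
    exact this.pow_nonneg _
  have hden : ∀ n ∈ Finset.Icc 1 p, (0:ℝ) < 1 - q ^ n := by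
    intro n hn
    have hn1 : 1 ≤ n := (Finset.mem_Icc.mp hn).1
    have : q ^ n < 1 := pow_lt_one₀ hq0.le hq1 (by omega)
    linarith
  have hterm : ∀ u : ℝ, ∀ n ∈ Finset.Icc 1 p,
      0 ≤ (n : ℝ) ^ m * q ^ ((n : ℝ) * u) / (1 - q ^ n) := by
    intro u n hn
    apply div_nonneg _ (hden n hn).le
    positivity
  constructor
  · unfold psiPQDeriv
    apply mul_le_mul_of_nonneg_left _ hL
    apply Finset.sum_le_sum
    intro n hn
    have hn1 : 1 ≤ n := (Finset.mem_Icc.mp hn).1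
    have hn0 : (0:ℝ) < n := by exact_mod_cast hn1
    have hle : q ^ ((n : ℝ) * (s + t)) ≤ q ^ ((n : ℝ) * s) := by
      apply Real.rpow_le_rpow_of_exponent_ge hq0 hq1.le
      nlinarith
    have hd := hden n hn
    have hnm : (0:ℝ) ≤ (n : ℝ) ^ m := by positivity
    apply div_le_div_of_nonneg_right ?_ hd.le
    exact mul_le_mul_of_nonneg_left hle hnm
  · unfold psiPQDeriv
    apply mul_nonneg hL
    exact Finset.sum_nonneg (hterm (s + t))
end

section
/- Let p be a positive integer, q ∈ (0,1) and 0 < s ≤ 1. Then −ln [p]_q − (ln q) ∑_{n=1}^{p} q^{n s}/(1 - q^n) ≥ 0; equivalently, ψ_{p,q}(s) ≤ 0 for all 0 < s ≤ 1. -/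
open Finset

theorem psiPQ_nonpos (p : ℕ) (hp : 0 < p) (q : ℝ) (hq : q ∈ Set.Ioo (0 : ℝ) 1)
    (s : ℝ) (hs0 : 0 < s) (hs1 : s ≤ 1) :
    0 ≤ -Real.log ((1 - q ^ p) / (1 - q)) -
        Real.log q * ∑ n ∈ Finset.Icc 1 p, q ^ ((n : ℝ) * s) / (1 - q ^ n) ∧
      psiPQ p q s ≤ 0 := by
  obtain ⟨hq0, hq1⟩ := hq
  have hpow : ∀ n : ℕ, 1 ≤ n → q ^ n < 1 := fun n hn =>
    pow_lt_one₀ hq0.le hq1 (by omega)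
  have hden : ∀ n : ℕ, 1 ≤ n → 0 < 1 - q ^ n := fun n hn => by
    have := hpow n hn; linarith
  have hlogq : Real.log q < 0 := Real.log_neg hq0 hq1
  set B := ∑ n ∈ Icc 1 p, q ^ n / (1 - q ^ n) with hB
  set A := ∑ n ∈ Icc 1 p, q ^ ((n : ℝ) * s) / (1 - q ^ n) with hA
  -- Step 1: B ≤ A, since q^(n*s) ≥ q^n for s ≤ 1
  have hBA : B ≤ A := by
    apply Finset.sum_le_sum
    intro n hn
    have hn1 : 1 ≤ n := (Finset.mem_Icc.mp hn).1
    have hd := hden n hn1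
    have hnum : q ^ n ≤ q ^ ((n : ℝ) * s) := by
      rw [← Real.rpow_natCast q n]
      apply Real.rpow_le_rpow_of_exponent_ge hq0 hq1.le
      have : (0:ℝ) ≤ (n:ℝ) := Nat.cast_nonneg n
      nlinarith
    exact (div_le_div_iff_of_pos_right hd).mpr hnum
  -- Step 2: log((1-q^p)/(1-q)) ≤ (-log q) * B  (telescoping)
  have hq1' : 0 < 1 - q := by linarith
  have hqp := hden p hp
  have key : Real.log ((1 - q ^ p) / (1 - q)) ≤ (-Real.log q) * B := by
    have hL : Real.log ((1 - q ^ p) / (1 - q)) =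
        ∑ n ∈ Finset.range (p - 1),
          (Real.log (1 - q ^ (n + 2)) - Real.log (1 - q ^ (n + 1))) := by
      have := Finset.sum_range_sub (fun n => Real.log (1 - q ^ (n + 1))) (p - 1)
      have hp1 : p - 1 + 1 = p := Nat.succ_pred_eq_of_pos hp
      rw [Real.log_div hqp.ne' hq1'.ne']
      simp only [this, hp1]
      norm_num
    rw [hL]
    have hterm : ∀ n ∈ Finset.range (p - 1),
        Real.log (1 - q ^ (n + 2)) - Real.log (1 - q ^ (n + 1)) ≤
          (-Real.log q) * (q ^ (n + 1) / (1 - q ^ (n + 1))) := by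
      intro n _
      have ha := hden (n + 1) (by omega)
      have hb := hden (n + 2) (by omega)
      have h1 : Real.log (1 - q ^ (n + 2)) - Real.log (1 - q ^ (n + 1)) =
          Real.log ((1 - q ^ (n + 2)) / (1 - q ^ (n + 1))) := by
        rw [Real.log_div hb.ne' ha.ne']
      rw [h1]
      have h2 : Real.log ((1 - q ^ (n + 2)) / (1 - q ^ (n + 1))) ≤
          (1 - q ^ (n + 2)) / (1 - q ^ (n + 1)) - 1 :=
        Real.log_le_sub_one_of_pos (div_pos hb ha)
      have h3 : (1 - q ^ (n + 2)) / (1 - q ^ (n + 1)) - 1 =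
          (q ^ (n + 1) * (1 - q)) / (1 - q ^ (n + 1)) := by
        field_simp
        ring
      have h4 : 1 - q ≤ -Real.log q := by
        have := Real.log_le_sub_one_of_pos hq0
        linarith
      have hqn : 0 < q ^ (n + 1) := pow_pos hq0 _
      have h5 : (q ^ (n + 1) * (1 - q)) / (1 - q ^ (n + 1)) ≤
          (q ^ (n + 1) * (-Real.log q)) / (1 - q ^ (n + 1)) := by
        apply (div_le_div_iff_of_pos_right ha).mpr
        nlinarith
      calc Real.log ((1 - q ^ (n + 2)) / (1 - q ^ (n + 1)))
          ≤ (1 - q ^ (n + 2)) / (1 - q ^ (n + 1)) - 1 := h2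
        _ = (q ^ (n + 1) * (1 - q)) / (1 - q ^ (n + 1)) := h3
        _ ≤ (q ^ (n + 1) * (-Real.log q)) / (1 - q ^ (n + 1)) := h5
        _ = (-Real.log q) * (q ^ (n + 1) / (1 - q ^ (n + 1))) := by ring
    calc ∑ n ∈ Finset.range (p - 1),
          (Real.log (1 - q ^ (n + 2)) - Real.log (1 - q ^ (n + 1)))
        ≤ ∑ n ∈ Finset.range (p - 1),
            (-Real.log q) * (q ^ (n + 1) / (1 - q ^ (n + 1))) :=
          Finset.sum_le_sum hterm
      _ ≤ ∑ n ∈ Finset.range p,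
            (-Real.log q) * (q ^ (n + 1) / (1 - q ^ (n + 1))) := by
          apply Finset.sum_le_sum_of_subset_of_nonneg
          · exact Finset.range_subset_range.mpr (Nat.sub_le p 1)
          · intro n hn _
            have ha := hden (n + 1) (by omega)
            have h0 : (0:ℝ) ≤ q ^ (n + 1) / (1 - q ^ (n + 1)) :=
              div_nonneg (pow_pos hq0 _).le ha.le
            nlinarith
      _ = (-Real.log q) * B := by
          rw [hB, Finset.mul_sum]
          rw [← Finset.Ico_add_one_right_eq_Icc, Finset.sum_Ico_eq_sum_range]
          simp [Nat.add_comm]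
  -- combine
  have hpsi : psiPQ p q s ≤ 0 := by
    unfold psiPQ
    rw [← hA]
    have h6 : Real.log q * A ≤ Real.log q * B := by
      exact mul_le_mul_of_nonpos_left hBA hlogq.le
    nlinarith [key, h6]
  constructor
  · have := hpsi
    unfold psiPQ at this
    rw [← hA] at this
    linarith
  · exact hpsi
end

section
/- Let p be a positive integer, q ∈ (0,1), s > 0, and let m be a positive integer. Then lim_{t→∞} [ψ_{p,q}^{(m)}(s+t) − ψ_{p,q}^{(m)}(s) − ψ_{p,q}^{(m)}(t)] = −(ln q)^{m+1} ∑_{n=1}^{p} n^m q^{n s}/(1 - q^n), and this limit is ≤ 0 when m is odd and ≥ 0 when m is even. -/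
open Finset

lemma psiPQDeriv_tendsto_zero (p : ℕ) (q : ℝ) (hq : q ∈ Set.Ioo (0 : ℝ) 1) (m : ℕ) :
    Filter.Tendsto (fun t => psiPQDeriv p q m t) Filter.atTop (nhds 0) := by
  obtain ⟨hq0, hq1⟩ := hq
  unfold psiPQDeriv
  have : Filter.Tendsto
      (fun t => ∑ n ∈ Finset.Icc 1 p, (n : ℝ) ^ m * q ^ ((n : ℝ) * t) / (1 - q ^ n))
      Filter.atTop (nhds 0) := by
    have h0 : (0 : ℝ) = ∑ n ∈ Finset.Icc 1 p, (0:ℝ) := by simp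
    rw [h0]
    refine tendsto_finset_sum _ fun n hn => ?_
    have hn1 : 1 ≤ n := (Finset.mem_Icc.mp hn).1
    have hbase : Filter.Tendsto (fun x : ℝ => q ^ x) Filter.atTop (nhds 0) :=
      tendsto_rpow_atTop_of_base_lt_one q (by linarith) hq1
    have hlin : Filter.Tendsto (fun t : ℝ => (n : ℝ) * t) Filter.atTop Filter.atTop :=
      Filter.Tendsto.const_mul_atTop (by exact_mod_cast hn1 : (0:ℝ) < n) Filter.tendsto_id
    have hcomp : Filter.Tendsto (fun t : ℝ => q ^ ((n : ℝ) * t)) Filter.atTop (nhds 0) :=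
      hbase.comp hlin
    have := (hcomp.const_mul ((n : ℝ) ^ m)).div_const (1 - q ^ n)
    simpa using this
  have := this.const_mul ((Real.log q) ^ (m + 1))
  simpa using this

theorem psiPQDeriv_limit (p : ℕ) (hp : 0 < p) (q : ℝ) (hq : q ∈ Set.Ioo (0 : ℝ) 1)
    (s : ℝ) (hs : 0 < s) (m : ℕ) (hm : 0 < m) :
    Filter.Tendsto (fun t => psiPQDeriv p q m (s + t) - psiPQDeriv p q m s - psiPQDeriv p q m t)
      Filter.atTop
      (nhds (-(Real.log q ^ (m + 1) *
        ∑ n ∈ Finset.Icc 1 p, (n : ℝ) ^ m * q ^ ((n : ℝ) * s) / (1 - q ^ n)))) ∧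
    (Odd m →
      -(Real.log q ^ (m + 1) *
        ∑ n ∈ Finset.Icc 1 p, (n : ℝ) ^ m * q ^ ((n : ℝ) * s) / (1 - q ^ n)) ≤ 0) ∧
    (Even m →
      0 ≤ -(Real.log q ^ (m + 1) *
        ∑ n ∈ Finset.Icc 1 p, (n : ℝ) ^ m * q ^ ((n : ℝ) * s) / (1 - q ^ n))) := by
  obtain ⟨hq0, hq1⟩ := hq
  have hlog : Real.log q < 0 := Real.log_neg hq0 hq1
  have hzero := psiPQDeriv_tendsto_zero p q ⟨hq0, hq1⟩ m
  have hshift : Filter.Tendsto (fun t => psiPQDeriv p q m (s + t)) Filter.atTop (nhds 0) :=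
    hzero.comp (Filter.tendsto_atTop_add_const_left _ s Filter.tendsto_id)
  have hsum_nonneg : 0 ≤ ∑ n ∈ Finset.Icc 1 p, (n : ℝ) ^ m * q ^ ((n : ℝ) * s) / (1 - q ^ n) := by
    refine Finset.sum_nonneg fun n hn => ?_
    have hn1 : 1 ≤ n := (Finset.mem_Icc.mp hn).1
    have h1 : 0 < 1 - q ^ n := by
      have := pow_lt_one₀ (le_of_lt hq0) hq1 (by omega : n ≠ 0)
      linarith
    have h2 : 0 < q ^ ((n : ℝ) * s) := Real.rpow_pos_of_pos hq0 _
    positivity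
  refine ⟨?_, ?_, ?_⟩
  · have := (hshift.sub (tendsto_const_nhds (x := psiPQDeriv p q m s))).sub hzero
    have heq : (0 : ℝ) - psiPQDeriv p q m s - 0 =
        -(Real.log q ^ (m + 1) *
          ∑ n ∈ Finset.Icc 1 p, (n : ℝ) ^ m * q ^ ((n : ℝ) * s) / (1 - q ^ n)) := by
      unfold psiPQDeriv; ring
    rwa [heq] at this
  · intro hodd
    have heven : Even (m + 1) := Odd.add_one hodd
    have : 0 ≤ Real.log q ^ (m + 1) := heven.pow_nonneg _
    nlinarith
  · intro heven
    have hodd : Odd (m + 1) := Even.add_one heven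
    have : Real.log q ^ (m + 1) ≤ 0 := hodd.pow_nonpos (le_of_lt hlog)
    nlinarith
end
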